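/- (Occupation time of a given distance by the hypercube walk, from the proof of Lemma 4.2.) Fix ω ∈ (1/2,1) and set ν = ⌊N^ω⌋. Define ρ_N(d) = E[ Σ_{i=1}^ν 1{ dist(Y_N(i), Y_N(0)) = d } ]. Then for all sufficiently large N and all d with 1 ≤ d ≤ ν: e^{−ν²/N} ≤ ρ_N(d) ≤ 2. -/

import Mathlib

open MeasureTheory ProbabilityTheory Filter Real
open scoped ENNReal Classical

noncomputable section

/-- Deterministic hypercube walk path: at step `k` flip the sign of coordinate `I k`,
starting from the configuration `y`. -/
def walk (I : ℕ → ℕ) (y : ℕ → ℝ) : ℕ → ℕ → ℝ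
  | 0 => y
  | k + 1 => Function.update (walk I y k) (I k) (-(walk I y k (I k)))

/-- The all-ones starting configuration `(1,…,1)`. -/
def onevec : ℕ → ℝ := fun _ => 1

/-- Hamming distance between two configurations, restricted to the first `N` coordinates. -/
def hdist (N : ℕ) (σ τ : ℕ → ℝ) : ℕ := ((Finset.range N).filter fun i => σ i ≠ τ i).card

/-- `r(N) = N^{1/2} e^{Nγ²/(2β²)}`. -/
def rN (β γ : ℝ) (N : ℕ) : ℝ := Real.sqrt N * Real.exp (N * γ ^ 2 / (2 * β ^ 2))

/-- Block length `ν = ⌊N^w⌋`. -/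
def nuN (w : ℝ) (N : ℕ) : ℕ := ⌊(N : ℝ) ^ w⌋₊

/-- The simple random walk on the `N`-dimensional hypercube started at `(1,…,1)`,
driven by the coordinate choices `I N`. -/
def Ywalk {Ω : Type*} (I : ℕ → ℕ → Ω → ℕ) (N k : ℕ) (ω : Ω) : ℕ → ℝ :=
  walk (fun j => I N j ω) onevec k

end

section Det

variable (I : ℕ → ℕ) (N : ℕ)

lemma walk_congr (I I' : ℕ → ℕ) (y : ℕ → ℝ) (k : ℕ) (h : ∀ j < k, I j = I' j) :
    walk I y k = walk I' y k := by
  induction k with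
  | zero => rfl
  | succ k ih =>
    have hk := ih (fun j hj => h j (Nat.lt_succ_of_lt hj))
    simp only [walk, hk, h k (Nat.lt_succ_self k)]

lemma walk_pm (k s : ℕ) : walk I onevec k s = 1 ∨ walk I onevec k s = -1 := by
  induction k with
  | zero => left; rfl
  | succ k ih =>
    by_cases h : s = I k
    · subst h
      simp only [walk, Function.update_self]
      rcases ih with h1 | h1 <;> rw [h1] <;> simp
    · simpa only [walk, Function.update_of_ne h] using ih

lemma walk_fresh (k s : ℕ) (h : ∀ j < k, I j ≠ s) : walk I onevec k s = 1 := by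
  induction k with
  | zero => rfl
  | succ k ih =>
    have hs : I k ≠ s := h k (Nat.lt_succ_self k)
    simp only [walk, Function.update_of_ne (Ne.symm hs)]
    exact ih (fun j hj => h j (Nat.lt_succ_of_lt hj))

/-- The set of disagreeing coordinates. -/
noncomputable def dset (k : ℕ) : Finset ℕ := (Finset.range N).filter fun s => walk I onevec k s ≠ onevec s

lemma hdist_eq_dset (k : ℕ) : hdist N (walk I onevec k) onevec = (dset I N k).card := rfl

lemma dset_succ_up (k : ℕ) (hIk : I k < N) (h : walk I onevec k (I k) = 1) :
    dset I N (k + 1) = insert (I k) (dset I N k) := by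
  ext s
  by_cases hs : s = I k
  · subst hs
    simp [dset, walk, hIk, h, onevec]
    norm_num
  · simp only [dset]
    rw [Finset.mem_filter]
    simp [dset, walk, Function.update_of_ne hs, hs]

lemma dset_succ_down (k : ℕ) (h : walk I onevec k (I k) ≠ 1) :
    dset I N (k + 1) = (dset I N k).erase (I k) := by
  have hpm := walk_pm I k (I k)
  have hm1 : walk I onevec k (I k) = -1 := by tauto
  ext s
  by_cases hs : s = I k
  · subst hs
    simp [dset, walk, hm1, onevec]
  · simp only [dset]
    rw [Finset.mem_filter]
    simp [dset, walk, Function.update_of_ne hs, hs]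

lemma Ik_not_mem_dset (k : ℕ) (h : walk I onevec k (I k) = 1) : I k ∉ dset I N k := by
  rw [dset, Finset.mem_filter]
  simp [dset, h, onevec]

lemma Ik_mem_dset (k : ℕ) (hIk : I k < N) (h : walk I onevec k (I k) ≠ 1) :
    I k ∈ dset I N k := by
  rw [dset, Finset.mem_filter]
  simp [dset, hIk, onevec]
  exact h

lemma hdist_succ_up (k : ℕ) (hIk : I k < N) (h : walk I onevec k (I k) = 1) :
    hdist N (walk I onevec (k + 1)) onevec = hdist N (walk I onevec k) onevec + 1 := by
  rw [hdist_eq_dset, hdist_eq_dset, dset_succ_up I N k hIk h,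
    Finset.card_insert_of_notMem (Ik_not_mem_dset I N k h)]

lemma hdist_succ_down (k : ℕ) (hIk : I k < N) (h : walk I onevec k (I k) ≠ 1) :
    hdist N (walk I onevec (k + 1)) onevec + 1 = hdist N (walk I onevec k) onevec := by
  rw [hdist_eq_dset, hdist_eq_dset, dset_succ_down I N k h]
  exact Finset.card_erase_add_one (Ik_mem_dset I N k hIk h)

lemma hdist_zero : hdist N (walk I onevec 0) onevec = 0 := by
  simp [hdist, walk, onevec]

lemma hdist_step (k : ℕ) (hIk : I k < N) :
    hdist N (walk I onevec (k + 1)) onevec = hdist N (walk I onevec k) onevec + 1 ∨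
    hdist N (walk I onevec (k + 1)) onevec + 1 = hdist N (walk I onevec k) onevec := by
  by_cases h : walk I onevec k (I k) = 1
  · exact Or.inl (hdist_succ_up I N k hIk h)
  · exact Or.inr (hdist_succ_down I N k hIk h)

lemma dset_subset_image (k : ℕ) :
    dset I N k ⊆ (Finset.range k).image I := by
  intro s hs
  rw [dset, Finset.mem_filter] at hs
  simp only [dset, Finset.mem_filter, onevec] at hs
  by_contra hcon
  refine hs.2 (walk_fresh I k s fun j hj hj' => hcon ?_)
  subst hj'
  exact Finset.mem_image_of_mem I (Finset.mem_range.mpr hj)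

lemma hdist_le (k : ℕ) : hdist N (walk I onevec k) onevec ≤ k := by
  calc hdist N (walk I onevec k) onevec ≤ ((Finset.range k).image I).card :=
        Finset.card_le_card (dset_subset_image I N k)
    _ ≤ k := le_trans Finset.card_image_le (by simp)

/-- Pairwise-distinctness of the first `d` coordinate choices. -/
def pdist (d : ℕ) : Prop := ∀ j k, j < k → k < d → I j ≠ I k

lemma pdist_injOn {d : ℕ} (h : pdist I d) :
    Set.InjOn I ↑(Finset.range d) := by
  intro a ha b hb hab
  simp only [Finset.coe_range, Set.mem_Iio] at ha hb
  rcases lt_trichotomy a b with hlt | heq | hgt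
  · exact absurd hab (h a b hlt hb)
  · exact heq
  · exact absurd hab.symm (h b a hgt ha)

lemma hdist_eq_iff_pdist (hI : ∀ j, I j < N) (d : ℕ) :
    hdist N (walk I onevec d) onevec = d ↔ pdist I d := by
  constructor
  · intro h
    have hsub := dset_subset_image I N d
    have hcard : ((Finset.range d).image I).card = d := by
      have h1 : d ≤ ((Finset.range d).image I).card := by
        rw [hdist_eq_dset] at h
        calc d = (dset I N d).card := h.symm
          _ ≤ _ := Finset.card_le_card hsub
      have h2 : ((Finset.range d).image I).card ≤ d := by
        refine le_trans Finset.card_image_le (by simp)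
      omega
    have hinj : Set.InjOn I ↑(Finset.range d) := by
      apply Finset.injOn_of_card_image_eq
      rw [hcard, Finset.card_range]
    intro j k hjk hk hIjk
    have := hinj (by simp only [Finset.coe_range, Set.mem_Iio]; omega)
      (by simp only [Finset.coe_range, Set.mem_Iio]; exact hk) hIjk
    omega
  · intro h
    induction d with
    | zero => exact hdist_zero I N
    | succ d ih =>
      have hd : pdist I d := fun j k hjk hk => h j k hjk (Nat.lt_succ_of_lt hk)
      have hfresh : walk I onevec d (I d) = 1 :=
        walk_fresh I d (I d) (fun j hj => h j d hj (Nat.lt_succ_self d))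
      rw [hdist_succ_up I N d (hI d) hfresh, ih hd]

/-- Abstract path-counting lemma: visits to level `d` are bounded by 1 plus
down-steps adjacent to level `d`. -/
lemma count_visits (D : ℕ → ℕ) (d : ℕ) (hd : 1 ≤ d) (h0 : D 0 = 0)
    (hstep : ∀ n, D (n + 1) = D n + 1 ∨ D (n + 1) + 1 = D n) (n : ℕ) :
    (∑ i ∈ Finset.Icc 1 n, if D i = d then 1 else 0) ≤
      1 + ∑ i ∈ Finset.range n,
        (if D (i + 1) + 1 = D i ∧ (D i = d ∨ D i = d + 1) then 1 else 0 : ℕ) := by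
  have key : ∀ m, (∑ i ∈ Finset.Icc 1 m, if D i = d then 1 else 0) ≤
      (if d ≤ D m then 1 else 0) + ∑ i ∈ Finset.range m,
        (if D (i + 1) + 1 = D i ∧ (D i = d ∨ D i = d + 1) then 1 else 0 : ℕ) := by
    intro m
    induction m with
    | zero => simp
    | succ m ih =>
      rw [Finset.sum_Icc_succ_top (Nat.one_le_iff_ne_zero.mpr (Nat.succ_ne_zero m)),
        Finset.sum_range_succ]
      rcases hstep m with hs | hs <;> split_ifs at * <;> omega
  calc (∑ i ∈ Finset.Icc 1 n, if D i = d then 1 else 0) ≤ _ := key n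
    _ ≤ 1 + _ := by split_ifs <;> omega

end Det

section Prob
variable {Ω : Type*} [MeasurableSpace Ω] (μ : Measure Ω) [IsProbabilityMeasure μ]
variable (N : ℕ) (I : ℕ → Ω → ℕ)

def tup (n : ℕ) (ω : Ω) : Fin n → ℕ := fun k => I k ω

lemma meas_tup (hmeas : ∀ k, Measurable (I k)) (n : ℕ) : Measurable (tup I n) :=
  measurable_pi_lambda _ fun k => hmeas k

lemma measSet_tupEvent (hmeas : ∀ k, Measurable (I k)) {n : ℕ} (P : (Fin n → ℕ) → Prop) :
    MeasurableSet {ω | P (tup I n ω)} :=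
  meas_tup I hmeas n MeasurableSet.of_discrete

lemma cyl (hmeas : ∀ k, Measurable (I k))
    (hunif : ∀ k s, s < N → μ {ω | I k ω = s} = (N : ℝ≥0∞)⁻¹)
    (hindep : iIndepFun I μ)
    (n : ℕ) (P : (Fin n → ℕ) → Prop) (s : ℕ) (hs : s < N) :
    μ ({ω | P (tup I n ω)} ∩ {ω | I n ω = s}) = μ {ω | P (tup I n ω)} * (N : ℝ≥0∞)⁻¹ := by
  have hST : Disjoint (Finset.range n) ({n} : Finset ℕ) := by simp
  have h1 := hindep.indepFun_finset (Finset.range n) {n} hST hmeas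
  have hφ : Measurable (fun x : ((i : (Finset.range n : Finset ℕ)) → ℕ) =>
      (fun k : Fin n => x ⟨(k : ℕ), Finset.mem_range.mpr k.isLt⟩)) := .of_discrete
  have hψ : Measurable (fun x : ((i : ({n} : Finset ℕ)) → ℕ) =>
      x ⟨n, Finset.mem_singleton_self n⟩) := .of_discrete
  have h3 : IndepFun (tup I n) (I n) μ := h1.comp hφ hψ
  have h4 := h3.measure_inter_preimage_eq_mul {x | P x} {s}
    MeasurableSet.of_discrete (measurableSet_singleton s)
  have e1 : tup I n ⁻¹' {x | P x} = {ω | P (tup I n ω)} := rfl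
  have e2 : I n ⁻¹' {s} = {ω | I n ω = s} := by ext ω; simp
  rw [e1, e2] at h4
  rw [h4, hunif n s hs]

lemma master (hmeas : ∀ k, Measurable (I k)) (hlt : ∀ k ω, I k ω < N)
    (hunif : ∀ k s, s < N → μ {ω | I k ω = s} = (N : ℝ≥0∞)⁻¹)
    (hindep : iIndepFun I μ)
    (n : ℕ) (B : ℕ → (Fin n → ℕ) → Prop) :
    μ {ω | B (I n ω) (tup I n ω)} =
      (N : ℝ≥0∞)⁻¹ * ∑ s ∈ Finset.range N, μ {ω | B s (tup I n ω)} := by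
  have hset : {ω | B (I n ω) (tup I n ω)} =
      ⋃ s ∈ Finset.range N, ({ω | B s (tup I n ω)} ∩ {ω | I n ω = s}) := by
    ext ω
    simp only [Set.mem_iUnion, Finset.mem_range, Set.mem_inter_iff, Set.mem_setOf_eq]
    constructor
    · intro h; exact ⟨I n ω, hlt n ω, h, rfl⟩
    · rintro ⟨s, _, h, heq⟩; subst heq; exact h
  rw [hset, measure_biUnion_finset]
  · rw [Finset.sum_congr rfl fun s hs => cyl μ N I hmeas hunif hindep n (B s) s
      (Finset.mem_range.mp hs), ← Finset.sum_mul, mul_comm]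
  · intro a _ b _ hab
    refine Set.disjoint_left.mpr ?_
    rintro ω ⟨_, ha⟩ ⟨_, hb⟩
    exact hab (ha.symm.trans hb)
  · intro s _
    refine (measSet_tupEvent I hmeas (B s)).inter ?_
    have he : {ω | I n ω = s} = I n ⁻¹' {s} := by ext ω; simp
    rw [he]; exact (hmeas n) (measurableSet_singleton s)

lemma swapcount (A : Set Ω) (hA : MeasurableSet A) (C : ℕ → Set Ω)
    (hC : ∀ s, MeasurableSet (C s)) (F : Finset ℕ) (m : ℕ)
    (hcount : ∀ ω ∈ A, (F.filter fun s => ω ∈ C s).card = m) :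
    ∑ s ∈ F, μ (A ∩ C s) = m * μ A := by
  have h1 : ∀ s, μ (A ∩ C s) = ∫⁻ ω, (A ∩ C s).indicator (fun _ => (1:ℝ≥0∞)) ω ∂μ := fun s =>
    (lintegral_indicator_one (hA.inter (hC s))).symm
  rw [Finset.sum_congr rfl fun s _ => h1 s,
    ← lintegral_finset_sum _ (fun s _ => measurable_const.indicator (hA.inter (hC s)))]
  have h2 : ∀ ω, (∑ s ∈ F, (A ∩ C s).indicator (fun _ => (1:ℝ≥0∞)) ω)
      = A.indicator (fun _ => (m : ℝ≥0∞)) ω := by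
    intro ω
    by_cases hω : ω ∈ A
    · rw [Set.indicator_of_mem hω, ← hcount ω hω, Finset.card_filter]
      push_cast
      refine Finset.sum_congr rfl fun s _ => ?_
      by_cases h : ω ∈ C s <;>
        simp [Set.indicator_apply, Set.mem_inter_iff, hω, h]
    · rw [Set.indicator_of_notMem hω]
      refine Finset.sum_eq_zero fun s _ => ?_
      simp [Set.indicator_apply, Set.mem_inter_iff, hω]
  rw [lintegral_congr h2, lintegral_indicator_const hA]

end Prob

section App
variable {Ω : Type*} [MeasurableSpace Ω] (μ : Measure Ω) [IsProbabilityMeasure μ]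
variable (N : ℕ) (I : ℕ → Ω → ℕ)

def wtup (n : ℕ) (x : Fin n → ℕ) : ℕ → ℕ := fun j => if h : j < n then x ⟨j, h⟩ else 0

lemma wtup_tup (ω : Ω) (n j : ℕ) (hj : j < n) : wtup n (tup I n ω) j = I j ω := by
  simp [wtup, hj, tup]

lemma walk_wtup (ω : Ω) {n : ℕ} (i : ℕ) (hi : i ≤ n) :
    walk (wtup n (tup I n ω)) onevec i = walk (fun j => I j ω) onevec i :=
  walk_congr _ _ _ i (fun j hj => wtup_tup I ω n j (lt_of_lt_of_le hj hi))

/-- Event: distance at time `i` equals `ℓ`. -/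
def Dev (i ℓ : ℕ) : Set Ω := {ω | hdist N (walk (fun j => I j ω) onevec i) onevec = ℓ}

/-- Event: coordinate `s` disagrees at time `i`. -/
def Cev (i s : ℕ) : Set Ω := {ω | walk (fun j => I j ω) onevec i s ≠ 1}

/-- Event: distance at time `i` equals `ℓ` and step `i` is a down-step. -/
def Downev (i ℓ : ℕ) : Set Ω :=
  Dev N I i ℓ ∩ {ω | walk (fun j => I j ω) onevec i (I i ω) ≠ 1}

/-- Event: the first `d` coordinate choices are pairwise distinct. -/
def Einj (d : ℕ) : Set Ω := {ω | pdist (fun j => I j ω) d}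

lemma meas_Dev (hmeas : ∀ k, Measurable (I k)) (i ℓ : ℕ) : MeasurableSet (Dev N I i ℓ) := by
  have : Dev N I i ℓ = {ω | (fun x : Fin i → ℕ =>
      hdist N (walk (wtup i x) onevec i) onevec = ℓ) (tup I i ω)} := by
    ext ω; rw [Set.mem_setOf_eq]; rw [show (fun x : Fin i → ℕ =>
      hdist N (walk (wtup i x) onevec i) onevec = ℓ) (tup I i ω)
      = (hdist N (walk (wtup i (tup I i ω)) onevec i) onevec = ℓ) from rfl,
      walk_wtup I ω i le_rfl]; rfl
  rw [this]
  exact measSet_tupEvent I hmeas (fun x : Fin i → ℕ => hdist N (walk (wtup i x) onevec i) onevec = ℓ)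

lemma meas_Cev (hmeas : ∀ k, Measurable (I k)) (i s : ℕ) : MeasurableSet (Cev I i s) := by
  have : Cev I i s = {ω | (fun x : Fin i → ℕ =>
      walk (wtup i x) onevec i s ≠ 1) (tup I i ω)} := by
    ext ω; rw [Set.mem_setOf_eq]; rw [show (fun x : Fin i → ℕ =>
      walk (wtup i x) onevec i s ≠ 1) (tup I i ω)
      = (walk (wtup i (tup I i ω)) onevec i s ≠ 1) from rfl, walk_wtup I ω i le_rfl]; rfl
  rw [this]
  exact measSet_tupEvent I hmeas (fun x : Fin i → ℕ => walk (wtup i x) onevec i s ≠ 1)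

lemma meas_Downev (hmeas : ∀ k, Measurable (I k)) (i ℓ : ℕ) :
    MeasurableSet (Downev N I i ℓ) := by
  have : Downev N I i ℓ = {ω | (fun x : Fin (i+1) → ℕ =>
      hdist N (walk (wtup (i+1) x) onevec i) onevec = ℓ ∧
      walk (wtup (i+1) x) onevec i (x (Fin.last i)) ≠ 1) (tup I (i+1) ω)} := by
    ext ω
    have hw : walk (wtup (i+1) (tup I (i+1) ω)) onevec i = walk (fun j => I j ω) onevec i :=
      walk_wtup I ω i (Nat.le_succ i)
    have hlast : (tup I (i+1) ω) (Fin.last i) = I i ω := rfl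
    simp only [Downev, Dev, Set.mem_inter_iff, Set.mem_setOf_eq, hw, hlast]
  rw [this]
  exact measSet_tupEvent I hmeas (fun x : Fin (i+1) → ℕ =>
    hdist N (walk (wtup (i+1) x) onevec i) onevec = ℓ ∧
    walk (wtup (i+1) x) onevec i (x (Fin.last i)) ≠ 1)

lemma meas_Einj (hmeas : ∀ k, Measurable (I k)) (d : ℕ) : MeasurableSet (Einj I d) := by
  have : Einj I d = {ω | (fun x : Fin d → ℕ => pdist (wtup d x) d) (tup I d ω)} := by
    ext ω
    simp only [Einj, Set.mem_setOf_eq, pdist]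
    constructor
    · intro h j k hjk hk
      rw [wtup_tup I ω d j (hjk.trans hk), wtup_tup I ω d k hk]
      exact h j k hjk hk
    · intro h j k hjk hk
      have := h j k hjk hk
      rwa [wtup_tup I ω d j (hjk.trans hk), wtup_tup I ω d k hk] at this
  rw [this]
  exact measSet_tupEvent I hmeas (fun x : Fin d → ℕ => pdist (wtup d x) d)

lemma down_eq (hmeas : ∀ k, Measurable (I k)) (hlt : ∀ k ω, I k ω < N)
    (hunif : ∀ k s, s < N → μ {ω | I k ω = s} = (N : ℝ≥0∞)⁻¹)
    (hindep : iIndepFun I μ) (i ℓ : ℕ) :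
    μ (Downev N I i ℓ) = (N : ℝ≥0∞)⁻¹ * (ℓ * μ (Dev N I i ℓ)) := by
  have hev : Downev N I i ℓ = {ω | (fun s (x : Fin i → ℕ) =>
      hdist N (walk (wtup i x) onevec i) onevec = ℓ ∧
      walk (wtup i x) onevec i s ≠ 1) (I i ω) (tup I i ω)} := by
    ext ω
    have hw : walk (wtup i (tup I i ω)) onevec i = walk (fun j => I j ω) onevec i :=
      walk_wtup I ω i le_rfl
    simp only [Downev, Dev, Set.mem_inter_iff, Set.mem_setOf_eq, hw]
  rw [hev, master μ N I hmeas hlt hunif hindep i (fun s (x : Fin i → ℕ) =>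
      hdist N (walk (wtup i x) onevec i) onevec = ℓ ∧ walk (wtup i x) onevec i s ≠ 1)]
  congr 1
  have hterm : ∀ s, {ω | (fun x : Fin i → ℕ =>
      hdist N (walk (wtup i x) onevec i) onevec = ℓ ∧
      walk (wtup i x) onevec i s ≠ 1) (tup I i ω)} = Dev N I i ℓ ∩ Cev I i s := by
    intro s
    ext ω
    have hw : walk (wtup i (tup I i ω)) onevec i = walk (fun j => I j ω) onevec i :=
      walk_wtup I ω i le_rfl
    simp only [Dev, Cev, Set.mem_inter_iff, Set.mem_setOf_eq]
    rw [hw]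
  rw [Finset.sum_congr rfl fun s _ => by rw [hterm s]]
  refine swapcount μ _ (meas_Dev N I hmeas i ℓ) _ (meas_Cev I hmeas i) _ ℓ ?_
  intro ω hω
  have hcard : ((Finset.range N).filter fun s => ω ∈ Cev I i s).card
      = hdist N (walk (fun j => I j ω) onevec i) onevec := by
    rw [hdist]
    congr 1
    apply Finset.filter_congr
    intro s _
    simp [Cev, onevec]
  rw [hcard]
  exact hω

end App

section App2
variable {Ω : Type*} [MeasurableSpace Ω] (μ : Measure Ω) [IsProbabilityMeasure μ]
variable (N : ℕ) (I : ℕ → Ω → ℕ)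

lemma Einj_zero : Einj I 0 = (Set.univ : Set Ω) := by
  ext ω; simp [Einj, pdist]

lemma Einj_succ_meas (hmeas : ∀ k, Measurable (I k)) (hlt : ∀ k ω, I k ω < N)
    (hunif : ∀ k s, s < N → μ {ω | I k ω = s} = (N : ℝ≥0∞)⁻¹)
    (hindep : iIndepFun I μ) (d : ℕ) :
    μ (Einj I (d+1)) = (N : ℝ≥0∞)⁻¹ * (((N - d : ℕ) : ℝ≥0∞) * μ (Einj I d)) := by
  have hev : Einj I (d+1) = {ω | (fun s (x : Fin d → ℕ) =>
      pdist (wtup d x) d ∧ ∀ j, j < d → wtup d x j ≠ s) (I d ω) (tup I d ω)} := by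
    ext ω
    simp only [Einj, Set.mem_setOf_eq, pdist]
    constructor
    · intro h
      refine ⟨fun j k hjk hk => ?_, fun j hj => ?_⟩
      · rw [wtup_tup I ω d j (hjk.trans hk), wtup_tup I ω d k hk]
        exact h j k hjk (hk.trans (Nat.lt_succ_self d))
      · rw [wtup_tup I ω d j hj]
        exact h j d hj (Nat.lt_succ_self d)
    · rintro ⟨h1, h2⟩ j k hjk hk
      rcases Nat.lt_succ_iff_lt_or_eq.mp hk with hk' | heq
      · have := h1 j k hjk hk'
        rwa [wtup_tup I ω d j (hjk.trans hk'), wtup_tup I ω d k hk'] at this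
      · have hj' : j < d := by omega
        have := h2 j hj'
        rw [wtup_tup I ω d j hj'] at this
        rw [heq]
        exact this
  rw [hev, master μ N I hmeas hlt hunif hindep d (fun s (x : Fin d → ℕ) =>
      pdist (wtup d x) d ∧ ∀ j, j < d → wtup d x j ≠ s)]
  congr 1
  have hterm : ∀ s, {ω | (fun x : Fin d → ℕ =>
      pdist (wtup d x) d ∧ ∀ j, j < d → wtup d x j ≠ s) (tup I d ω)}
      = Einj I d ∩ {ω : Ω | ∀ j, j < d → I j ω ≠ s} := by
    intro s; ext ω
    simp only [Einj, Set.mem_inter_iff, Set.mem_setOf_eq, pdist]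
    constructor
    · rintro ⟨h1, h2⟩
      refine ⟨fun j k hjk hk => ?_, fun j hj => ?_⟩
      · have := h1 j k hjk hk
        rwa [wtup_tup I ω d j (hjk.trans hk), wtup_tup I ω d k hk] at this
      · have := h2 j hj
        rwa [wtup_tup I ω d j hj] at this
    · rintro ⟨h1, h2⟩
      refine ⟨fun j k hjk hk => ?_, fun j hj => ?_⟩
      · rw [wtup_tup I ω d j (hjk.trans hk), wtup_tup I ω d k hk]
        exact h1 j k hjk hk
      · rw [wtup_tup I ω d j hj]
        exact h2 j hj
  rw [Finset.sum_congr rfl fun s _ => by rw [hterm s]]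
  refine swapcount μ _ (meas_Einj I hmeas d) _ (fun s => ?_) _ (N - d) ?_
  · have : {ω : Ω | ∀ j, j < d → I j ω ≠ s}
        = {ω | (fun x : Fin d → ℕ => ∀ j : Fin d, x j ≠ s) (tup I d ω)} := by
      ext ω
      simp only [Set.mem_setOf_eq]
      constructor
      · intro h j; exact h j j.isLt
      · intro h j hj; exact h ⟨j, hj⟩
    rw [this]
    exact measSet_tupEvent I hmeas (fun x : Fin d → ℕ => ∀ j : Fin d, x j ≠ s)
  · intro ω hω
    have himg : (Finset.range d).image (fun j => I j ω) ⊆ Finset.range N := by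
      intro s hs
      simp only [Finset.mem_image] at hs
      obtain ⟨j, _, rfl⟩ := hs
      exact Finset.mem_range.mpr (hlt j ω)
    have hfilter : ((Finset.range N).filter fun s => ω ∈ {ω : Ω | ∀ j, j < d → I j ω ≠ s})
        = Finset.range N \ (Finset.range d).image (fun j => I j ω) := by
      ext s
      simp only [Finset.mem_filter, Finset.mem_sdiff, Finset.mem_image, Set.mem_setOf_eq,
        Finset.mem_range]
      push_neg
      tauto
    have hfc := congrArg Finset.card hfilter
    rw [Finset.card_sdiff_of_subset himg, Finset.card_range,
      Finset.card_image_of_injOn (pdist_injOn _ hω), Finset.card_range] at hfc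
    rw [Finset.filter_congr_decidable] at hfc
    rw [Finset.filter_congr_decidable]
    exact hfc

lemma Einj_prod (hmeas : ∀ k, Measurable (I k)) (hlt : ∀ k ω, I k ω < N)
    (hunif : ∀ k s, s < N → μ {ω | I k ω = s} = (N : ℝ≥0∞)⁻¹)
    (hindep : iIndepFun I μ) (d : ℕ) :
    μ (Einj I d) = ∏ j ∈ Finset.range d, (((N - j : ℕ) : ℝ≥0∞) * (N : ℝ≥0∞)⁻¹) := by
  induction d with
  | zero => rw [Einj_zero]; simp
  | succ d ih =>
    rw [Einj_succ_meas μ N I hmeas hlt hunif hindep d, ih, Finset.prod_range_succ]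
    ring

lemma Dev_diag (hlt : ∀ k ω, I k ω < N) (d : ℕ) : Dev N I d d = Einj I d := by
  ext ω
  exact hdist_eq_iff_pdist (fun j => I j ω) N (fun j => hlt j ω) d

lemma Dev_empty_zero (ℓ : ℕ) (hℓ : 1 ≤ ℓ) : Dev N I 0 ℓ = (∅ : Set Ω) := by
  ext ω
  simp only [Dev, Set.mem_setOf_eq, Set.mem_empty_iff_false, iff_false]
  rw [hdist_zero]
  omega

lemma Dev_empty_gt (i ℓ : ℕ) (hi : i < ℓ) : Dev N I i ℓ = (∅ : Set Ω) := by
  ext ω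
  simp only [Dev, Set.mem_setOf_eq, Set.mem_empty_iff_false, iff_false]
  have := hdist_le (fun j => I j ω) N i
  omega

lemma occ_le (hmeas : ∀ k, Measurable (I k)) (hlt : ∀ k ω, I k ω < N) (d ν : ℕ) (hd : 1 ≤ d) :
    ∑ i ∈ Finset.Icc 1 ν, μ (Dev N I i d) ≤
      1 + ∑ i ∈ Finset.range ν, (μ (Downev N I i d) + μ (Downev N I i (d+1))) := by
  calc ∑ i ∈ Finset.Icc 1 ν, μ (Dev N I i d)
      = ∫⁻ ω, ∑ i ∈ Finset.Icc 1 ν, (Dev N I i d).indicator (fun _ => (1:ℝ≥0∞)) ω ∂μ := by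
        rw [lintegral_finset_sum _ (fun i _ => measurable_const.indicator (meas_Dev N I hmeas i d))]
        exact Finset.sum_congr rfl fun i _ => (lintegral_indicator_one (meas_Dev N I hmeas i d)).symm
    _ ≤ ∫⁻ ω, (1 + ∑ i ∈ Finset.range ν, ((Downev N I i d).indicator (fun _ => (1:ℝ≥0∞)) ω
          + (Downev N I i (d+1)).indicator (fun _ => (1:ℝ≥0∞)) ω)) ∂μ := by
        refine lintegral_mono fun ω => ?_
        have hcv := count_visits (fun i => hdist N (walk (fun j => I j ω) onevec i) onevec) d hd
          (hdist_zero _ N) (fun n => hdist_step _ N n (hlt n ω)) ν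
        have l1 : ∑ i ∈ Finset.Icc 1 ν, (Dev N I i d).indicator (fun _ => (1:ℝ≥0∞)) ω
            = ((∑ i ∈ Finset.Icc 1 ν,
                if hdist N (walk (fun j => I j ω) onevec i) onevec = d then 1 else 0 : ℕ) : ℝ≥0∞) := by
          push_cast
          refine Finset.sum_congr rfl fun i _ => ?_
          by_cases h : hdist N (walk (fun j => I j ω) onevec i) onevec = d <;>
            simp [Set.indicator_apply, Dev, Set.mem_setOf_eq, h]
        have l2 : ∀ i, (if hdist N (walk (fun j => I j ω) onevec (i+1)) onevec + 1
              = hdist N (walk (fun j => I j ω) onevec i) onevec ∧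
              (hdist N (walk (fun j => I j ω) onevec i) onevec = d ∨
               hdist N (walk (fun j => I j ω) onevec i) onevec = d + 1) then (1:ℝ≥0∞) else 0)
            ≤ (Downev N I i d).indicator (fun _ => (1:ℝ≥0∞)) ω
              + (Downev N I i (d+1)).indicator (fun _ => (1:ℝ≥0∞)) ω := by
          intro i
          split_ifs with h
          · obtain ⟨hdown, hcase⟩ := h
            have hw : walk (fun j => I j ω) onevec i (I i ω) ≠ 1 := by
              intro hup
              have := hdist_succ_up (fun j => I j ω) N i (hlt i ω) hup
              omega
            rcases hcase with hc | hc
            · have hmem : ω ∈ Downev N I i d := ⟨hc, hw⟩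
              rw [Set.indicator_of_mem hmem]
              exact le_self_add
            · have hmem : ω ∈ Downev N I i (d+1) := ⟨hc, hw⟩
              rw [Set.indicator_of_mem hmem]
              exact le_add_self
          · simp
        rw [l1]
        calc ((∑ i ∈ Finset.Icc 1 ν,
                if hdist N (walk (fun j => I j ω) onevec i) onevec = d then 1 else 0 : ℕ) : ℝ≥0∞)
            ≤ ((1 + ∑ i ∈ Finset.range ν,
                (if hdist N (walk (fun j => I j ω) onevec (i+1)) onevec + 1
                  = hdist N (walk (fun j => I j ω) onevec i) onevec ∧
                  (hdist N (walk (fun j => I j ω) onevec i) onevec = d ∨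
                   hdist N (walk (fun j => I j ω) onevec i) onevec = d + 1)
                 then 1 else 0 : ℕ) : ℕ) : ℝ≥0∞) := Nat.cast_le.mpr hcv
          _ ≤ _ := by
              push_cast
              exact add_le_add (le_refl 1) (Finset.sum_le_sum fun i _ => l2 i)
    _ = 1 + ∑ i ∈ Finset.range ν, (μ (Downev N I i d) + μ (Downev N I i (d+1))) := by
        rw [lintegral_add_left measurable_const, lintegral_const, measure_univ, mul_one,
          lintegral_finset_sum _ (fun i _ => (show Measurable (fun a =>
            (Downev N I i d).indicator (fun _ => (1:ℝ≥0∞)) a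
              + (Downev N I i (d+1)).indicator (fun _ => (1:ℝ≥0∞)) a) from
            ((measurable_const.indicator (meas_Downev N I hmeas i d)).add
              (measurable_const.indicator (meas_Downev N I hmeas i (d+1))))))]
        congr 1
        refine Finset.sum_congr rfl fun i _ => ?_
        rw [lintegral_add_left (measurable_const.indicator (meas_Downev N I hmeas i d))]
        exact congrArg₂ (· + ·) (lintegral_indicator_one (meas_Downev N I hmeas i d))
          (lintegral_indicator_one (meas_Downev N I hmeas i (d+1)))

end App2

section Analytic

lemma exp_neg_two_le (x : ℝ) (h0 : 0 ≤ x) (h2 : x ≤ 1/2) : Real.exp (-(2*x)) ≤ 1 - x := by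
  have hexp : Real.exp (-(2*x)) * Real.exp (2*x) = 1 := by
    rw [← Real.exp_add]; simp
  have h3 := Real.add_one_le_exp (2*x)
  have h4 := Real.exp_pos (2*x)
  nlinarith [Real.exp_pos (-(2*x))]

lemma prod_lb (N d ν : ℕ) (hN : 0 < N) (hd : 1 ≤ d) (hdν : d ≤ ν) (h2ν : 2*ν ≤ N) :
    Real.exp (-((ν:ℝ)^2/N)) ≤ ∏ j ∈ Finset.range d, (((N - j : ℕ):ℝ) * (N:ℝ)⁻¹) := by
  have hNpos : (0:ℝ) < N := by exact_mod_cast hN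
  have step1 : ∀ j ∈ Finset.range d, Real.exp ((-2/(N:ℝ)) * j) ≤ ((N - j : ℕ):ℝ) * (N:ℝ)⁻¹ := by
    intro j hj
    have hjd : j < d := Finset.mem_range.mp hj
    have hjN : j ≤ N := by omega
    have hcast : ((N - j : ℕ):ℝ) = (N:ℝ) - j := by
      rw [Nat.cast_sub hjN]
    have hx0 : 0 ≤ (j:ℝ)/N := by positivity
    have hx2 : (j:ℝ)/N ≤ 1/2 := by
      rw [div_le_div_iff₀ hNpos (by norm_num : (0:ℝ) < 2)]
      have : (2*j:ℝ) ≤ N := by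
        have : 2*j ≤ N := by omega
        exact_mod_cast this
      linarith
    have hle := exp_neg_two_le ((j:ℝ)/N) hx0 hx2
    have harg : (-2/(N:ℝ)) * j = -(2*((j:ℝ)/N)) := by field_simp
    rw [harg]
    calc Real.exp (-(2*((j:ℝ)/N))) ≤ 1 - (j:ℝ)/N := hle
      _ = ((N:ℝ) - j) * (N:ℝ)⁻¹ := by field_simp
      _ = _ := by rw [hcast]
  have hid : (∑ j ∈ Finset.range d, (j:ℝ)) * 2 = (d:ℝ) * ((d:ℝ) - 1) := by
    have h := Finset.sum_range_id_mul_two d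
    have h1 : ((∑ i ∈ Finset.range d, i : ℕ):ℝ) * 2 = ((d * (d-1) : ℕ):ℝ) := by
      exact_mod_cast congrArg (Nat.cast : ℕ → ℝ) h
    rw [Nat.cast_sum] at h1
    rw [h1, Nat.cast_mul, Nat.cast_sub hd]
    push_cast
    ring
  calc Real.exp (-((ν:ℝ)^2/N))
      ≤ Real.exp (∑ j ∈ Finset.range d, ((-2/(N:ℝ)) * j)) := by
        apply Real.exp_le_exp.mpr
        rw [← Finset.mul_sum]
        have hsum : (∑ j ∈ Finset.range d, (j:ℝ)) = (d:ℝ) * ((d:ℝ) - 1) / 2 := by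
          linarith [hid]
        rw [hsum]
        have hdr : (1:ℝ) ≤ d := by exact_mod_cast hd
        have hdν' : (d:ℝ) ≤ ν := by exact_mod_cast hdν
        have key : (-2/(N:ℝ)) * ((d:ℝ) * ((d:ℝ) - 1) / 2) = -((d:ℝ)*((d:ℝ)-1)/N) := by ring
        rw [key, neg_le_neg_iff]
        have hsq : (d:ℝ)*((d:ℝ)-1) ≤ (ν:ℝ)^2 := by nlinarith
        gcongr
    _ = ∏ j ∈ Finset.range d, Real.exp ((-2/(N:ℝ)) * j) := Real.exp_sum _ _
    _ ≤ ∏ j ∈ Finset.range d, (((N - j : ℕ):ℝ) * (N:ℝ)⁻¹) :=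
        Finset.prod_le_prod (fun j _ => (Real.exp_pos _).le) step1

end Analytic

lemma eventually_large (w : ℝ) (hw : w ∈ Set.Ioo (1/2 : ℝ) 1) :
    ∀ᶠ N : ℕ in atTop, 0 < N ∧ 4 * nuN w N + 2 ≤ N := by
  have h1 : Tendsto (fun x : ℝ => x ^ (-(1 - w))) atTop (nhds 0) :=
    tendsto_rpow_neg_atTop (by linarith [hw.2])
  have h2 : Tendsto (fun n : ℕ => ((n:ℝ)) ^ (-(1 - w))) atTop (nhds 0) :=
    h1.comp tendsto_natCast_atTop_atTop
  have h3 : ∀ᶠ n : ℕ in atTop, ((n:ℝ)) ^ (-(1 - w)) < 1/8 :=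
    h2.eventually_lt_const (by norm_num)
  filter_upwards [h3, eventually_ge_atTop 4] with n h8 h4
  have hn0 : 0 < n := by omega
  refine ⟨hn0, ?_⟩
  have hnr : (0:ℝ) < n := by exact_mod_cast hn0
  have hpow : (n:ℝ) ^ w = (n:ℝ) ^ (-(1-w)) * (n:ℝ) ^ (1:ℝ) := by
    rw [← Real.rpow_add hnr]; norm_num
  have hfloor : (nuN w n : ℝ) ≤ (n:ℝ)^w := Nat.floor_le (Real.rpow_nonneg hnr.le w)
  have hw8 : (n:ℝ)^w ≤ n/8 := by
    rw [hpow, Real.rpow_one]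
    calc (n:ℝ)^(-(1-w)) * n ≤ (1/8) * n := mul_le_mul_of_nonneg_right h8.le hnr.le
      _ = n/8 := by ring
  have hn4 : (4:ℝ) ≤ n := by exact_mod_cast h4
  have h4n : (4:ℝ) * (nuN w n : ℝ) + 2 ≤ n := by nlinarith
  exact_mod_cast h4n


/-- Occupation time of a given distance by the hypercube walk (from the proof of Lemma 4.2):
for all large `N` and all `1 ≤ d ≤ ν`, the expected number of times `i ∈ {1,…,ν}` with
`dist(Y_N(i), Y_N(0)) = d` lies between `e^{-ν²/N}` and `2`. -/
theorem stmt18 {Ω : Type*} [MeasurableSpace Ω] (μ : Measure Ω) [IsProbabilityMeasure μ]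
    (I : ℕ → ℕ → Ω → ℕ)
    (hImeas : ∀ N k, Measurable (I N k))
    (hIlt : ∀ N k ω, 0 < N → I N k ω < N)
    (hIunif : ∀ N, 0 < N → ∀ k s, s < N → μ {ω | I N k ω = s} = (N : ℝ≥0∞)⁻¹)
    (hIindep : ∀ N, iIndepFun (I N) μ)
    (w : ℝ) (hw : w ∈ Set.Ioo (1 / 2 : ℝ) 1) :
    ∀ᶠ N : ℕ in atTop, ∀ d : ℕ, 1 ≤ d → d ≤ nuN w N →
      Real.exp (-((nuN w N : ℝ) ^ 2 / N)) ≤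
        (∫ ω, (∑ i ∈ Finset.Icc 1 (nuN w N),
            if hdist N (Ywalk I N i ω) onevec = d then (1 : ℝ) else 0) ∂μ) ∧
      (∫ ω, (∑ i ∈ Finset.Icc 1 (nuN w N),
            if hdist N (Ywalk I N i ω) onevec = d then (1 : ℝ) else 0) ∂μ) ≤ 2 := by

  filter_upwards [eventually_large w hw] with N hL
  obtain ⟨hN0, h42⟩ := hL
  intro d hd1 hdν
  set ν := nuN w N with hν
  have hmeas := hImeas N
  have hlt : ∀ k ω, I N k ω < N := fun k ω => hIlt N k ω hN0
  have hunif : ∀ k s, s < N → μ {ω | I N k ω = s} = (N : ℝ≥0∞)⁻¹ :=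
    fun k s hs => hIunif N hN0 k s hs
  have hindep := hIindep N
  have h1 : ∀ i, (fun ω => if hdist N (Ywalk I N i ω) onevec = d then (1:ℝ) else 0)
      = fun ω => (Dev N (I N) i d).indicator (fun _ => (1:ℝ)) ω := by
    intro i; funext ω
    by_cases h : hdist N (walk (fun j => I N j ω) onevec i) onevec = d <;>
      simp [Set.indicator_apply, Dev, Set.mem_setOf_eq, Ywalk, h]
  have hint : (∫ ω, (∑ i ∈ Finset.Icc 1 ν,
        if hdist N (Ywalk I N i ω) onevec = d then (1:ℝ) else 0) ∂μ)
      = ∑ i ∈ Finset.Icc 1 ν, (μ (Dev N (I N) i d)).toReal := by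
    have hintg : ∀ i, Integrable (fun ω => if hdist N (Ywalk I N i ω) onevec = d
        then (1:ℝ) else 0) μ := by
      intro i
      rw [h1 i]
      exact (integrable_const (1:ℝ)).indicator (meas_Dev N (I N) hmeas i d)
    rw [integral_finset_sum _ (fun i _ => hintg i)]
    refine Finset.sum_congr rfl fun i _ => ?_
    rw [h1 i, integral_indicator_const (1:ℝ) (meas_Dev N (I N) hmeas i d), smul_eq_mul, mul_one]
    rfl
  constructor
  · rw [hint]
    have hmem : d ∈ Finset.Icc 1 ν := Finset.mem_Icc.mpr ⟨hd1, hdν⟩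
    have hsingle : (μ (Dev N (I N) d d)).toReal
        ≤ ∑ i ∈ Finset.Icc 1 ν, (μ (Dev N (I N) i d)).toReal :=
      Finset.single_le_sum (f := fun i => (μ (Dev N (I N) i d)).toReal)
        (fun i _ => ENNReal.toReal_nonneg) hmem
    refine le_trans ?_ hsingle
    rw [Dev_diag N (I N) hlt d, Einj_prod μ N (I N) hmeas hlt hunif hindep d,
      ENNReal.toReal_prod]
    have hfac : ∀ j ∈ Finset.range d, ((((N - j:ℕ):ℝ≥0∞)) * (N:ℝ≥0∞)⁻¹).toReal
        = ((N - j:ℕ):ℝ) * (N:ℝ)⁻¹ := by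
      intro j _
      rw [ENNReal.toReal_mul, ENNReal.toReal_inv, ENNReal.toReal_natCast, ENNReal.toReal_natCast]
    rw [Finset.prod_congr rfl hfac]
    exact prod_lb N d ν hN0 hd1 hdν (by omega)
  · rw [hint]
    have hfe : ∀ ℓ, 1 ≤ ℓ → (∑ i ∈ Finset.range ν, (μ (Dev N (I N) i ℓ)).toReal)
        ≤ ∑ i ∈ Finset.Icc 1 ν, (μ (Dev N (I N) i ℓ)).toReal := by
      intro ℓ hℓ
      have h0 : (μ (Dev N (I N) 0 ℓ)).toReal = 0 := by
        rw [Dev_empty_zero N (I N) ℓ hℓ]; simp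
      calc ∑ i ∈ Finset.range ν, (μ (Dev N (I N) i ℓ)).toReal
          = ∑ i ∈ (Finset.range ν).erase 0, (μ (Dev N (I N) i ℓ)).toReal :=
            (Finset.sum_erase (f := fun i => (μ (Dev N (I N) i ℓ)).toReal)
              (Finset.range ν) h0).symm
        _ ≤ _ := by
            refine Finset.sum_le_sum_of_subset_of_nonneg ?_
              (fun i _ _ => ENNReal.toReal_nonneg)
            intro i hi
            simp only [Finset.mem_erase, Finset.mem_range] at hi
            exact Finset.mem_Icc.mpr ⟨by omega, by omega⟩
    have hNtop : ((N:ℝ≥0∞))⁻¹ ≠ ⊤ := by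
      simp [hN0.ne']
    have hrec : ∀ ℓ, 1 ≤ ℓ → (∑ i ∈ Finset.Icc 1 ν, (μ (Dev N (I N) i ℓ)).toReal)
        ≤ 1 + (ℓ:ℝ) * (N:ℝ)⁻¹ * (∑ i ∈ Finset.range ν, (μ (Dev N (I N) i ℓ)).toReal)
          + ((ℓ:ℝ)+1) * (N:ℝ)⁻¹ * (∑ i ∈ Finset.range ν, (μ (Dev N (I N) i (ℓ+1))).toReal) := by
      intro ℓ hℓ
      have hocc := occ_le μ N (I N) hmeas hlt ℓ ν hℓ
      have h2 : ∀ i ∈ Finset.range ν, μ (Downev N (I N) i ℓ) + μ (Downev N (I N) i (ℓ+1))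
          = (N:ℝ≥0∞)⁻¹ * ((ℓ:ℝ≥0∞) * μ (Dev N (I N) i ℓ))
            + (N:ℝ≥0∞)⁻¹ * (((ℓ:ℝ≥0∞)+1) * μ (Dev N (I N) i (ℓ+1))) := by
        intro i _
        rw [down_eq μ N (I N) hmeas hlt hunif hindep i ℓ,
          down_eq μ N (I N) hmeas hlt hunif hindep i (ℓ+1)]
        push_cast
        ring
      rw [Finset.sum_congr rfl h2] at hocc
      have hterm : ∀ i, (N:ℝ≥0∞)⁻¹ * ((ℓ:ℝ≥0∞) * μ (Dev N (I N) i ℓ))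
            + (N:ℝ≥0∞)⁻¹ * (((ℓ:ℝ≥0∞)+1) * μ (Dev N (I N) i (ℓ+1))) ≠ ⊤ := by
        intro i
        refine ENNReal.add_ne_top.mpr ⟨?_, ?_⟩ <;>
          exact ENNReal.mul_ne_top hNtop (ENNReal.mul_ne_top (by simp) (measure_ne_top μ _))
      have hsumne : (∑ i ∈ Finset.range ν, ((N:ℝ≥0∞)⁻¹ * ((ℓ:ℝ≥0∞) * μ (Dev N (I N) i ℓ))
            + (N:ℝ≥0∞)⁻¹ * (((ℓ:ℝ≥0∞)+1) * μ (Dev N (I N) i (ℓ+1))))) ≠ ⊤ := by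
        rw [← lt_top_iff_ne_top, ENNReal.sum_lt_top]
        exact fun i _ => lt_top_iff_ne_top.mpr (hterm i)
      have hRne : (1 + ∑ i ∈ Finset.range ν, ((N:ℝ≥0∞)⁻¹ * ((ℓ:ℝ≥0∞) * μ (Dev N (I N) i ℓ))
            + (N:ℝ≥0∞)⁻¹ * (((ℓ:ℝ≥0∞)+1) * μ (Dev N (I N) i (ℓ+1))))) ≠ ⊤ :=
        ENNReal.add_ne_top.mpr ⟨by simp, hsumne⟩
      have h3 := ENNReal.toReal_mono hRne hocc
      rw [ENNReal.toReal_sum (fun i _ => measure_ne_top μ _),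
        ENNReal.toReal_add ENNReal.one_ne_top hsumne, ENNReal.toReal_one,
        ENNReal.toReal_sum (fun i _ => hterm i)] at h3
      refine le_trans h3 ?_
      have h4 : ∀ i ∈ Finset.range ν, ((N:ℝ≥0∞)⁻¹ * ((ℓ:ℝ≥0∞) * μ (Dev N (I N) i ℓ))
            + (N:ℝ≥0∞)⁻¹ * (((ℓ:ℝ≥0∞)+1) * μ (Dev N (I N) i (ℓ+1)))).toReal
          = (ℓ:ℝ) * (N:ℝ)⁻¹ * (μ (Dev N (I N) i ℓ)).toReal
            + ((ℓ:ℝ)+1) * (N:ℝ)⁻¹ * (μ (Dev N (I N) i (ℓ+1))).toReal := by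
        intro i _
        rw [ENNReal.toReal_add
          (ENNReal.mul_ne_top hNtop (ENNReal.mul_ne_top (by simp) (measure_ne_top μ _)))
          (ENNReal.mul_ne_top hNtop (ENNReal.mul_ne_top (by simp) (measure_ne_top μ _))),
          ENNReal.toReal_mul, ENNReal.toReal_mul, ENNReal.toReal_mul, ENNReal.toReal_mul,
          ENNReal.toReal_inv, ENNReal.toReal_natCast,
          ENNReal.toReal_add (by simp : ((ℓ:ℝ≥0∞)) ≠ ⊤) ENNReal.one_ne_top,
          ENNReal.toReal_one, ENNReal.toReal_natCast]
        ring
      rw [Finset.sum_congr rfl h4, Finset.sum_add_distrib, ← Finset.mul_sum, ← Finset.mul_sum]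
      exact le_of_eq (by ring)
    have heν1 : (∑ i ∈ Finset.range ν, (μ (Dev N (I N) i (ν+1))).toReal) = 0 := by
      refine Finset.sum_eq_zero fun i hi => ?_
      rw [Dev_empty_gt N (I N) i (ν+1) (by simp only [Finset.mem_range] at hi; omega)]
      simp
    have hstep : ∀ ℓ, 1 ≤ ℓ → ℓ ≤ ν →
        (∑ i ∈ Finset.range ν, (μ (Dev N (I N) i (ℓ+1))).toReal) ≤ 2 →
        (∑ i ∈ Finset.Icc 1 ν, (μ (Dev N (I N) i ℓ)).toReal) ≤ 2 := by
      intro ℓ hℓ1 hℓν hnext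
      have hE0 : 0 ≤ (∑ i ∈ Finset.Icc 1 ν, (μ (Dev N (I N) i ℓ)).toReal) :=
        Finset.sum_nonneg fun i _ => ENNReal.toReal_nonneg
      have hf : (∑ i ∈ Finset.range ν, (μ (Dev N (I N) i ℓ)).toReal)
          ≤ (∑ i ∈ Finset.Icc 1 ν, (μ (Dev N (I N) i ℓ)).toReal) := hfe ℓ hℓ1
      have hg0 : 0 ≤ (∑ i ∈ Finset.range ν, (μ (Dev N (I N) i (ℓ+1))).toReal) :=
        Finset.sum_nonneg fun i _ => ENNReal.toReal_nonneg
      have h := hrec ℓ hℓ1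
      have ha0 : (0:ℝ) ≤ (N:ℝ)⁻¹ := by positivity
      have hNr : (0:ℝ) < N := by exact_mod_cast hN0
      have haN : (N:ℝ) * (N:ℝ)⁻¹ = 1 := mul_inv_cancel₀ hNr.ne'
      have h42' : 4*(ν:ℝ) + 2 ≤ N := by exact_mod_cast h42
      have hℓν' : (ℓ:ℝ) ≤ ν := by exact_mod_cast hℓν
      have hl0 : (0:ℝ) ≤ ℓ := Nat.cast_nonneg ℓ
      have key1 : (∑ i ∈ Finset.Icc 1 ν, (μ (Dev N (I N) i ℓ)).toReal)
          ≤ 1 + (ℓ:ℝ)*(N:ℝ)⁻¹*(∑ i ∈ Finset.Icc 1 ν, (μ (Dev N (I N) i ℓ)).toReal)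
            + ((ℓ:ℝ)+1)*(N:ℝ)⁻¹*2 := by
        have t1 : (ℓ:ℝ)*(N:ℝ)⁻¹*(∑ i ∈ Finset.range ν, (μ (Dev N (I N) i ℓ)).toReal)
            ≤ (ℓ:ℝ)*(N:ℝ)⁻¹*(∑ i ∈ Finset.Icc 1 ν, (μ (Dev N (I N) i ℓ)).toReal) :=
          mul_le_mul_of_nonneg_left hf (by positivity)
        have t2 : ((ℓ:ℝ)+1)*(N:ℝ)⁻¹*(∑ i ∈ Finset.range ν, (μ (Dev N (I N) i (ℓ+1))).toReal)
            ≤ ((ℓ:ℝ)+1)*(N:ℝ)⁻¹*2 := mul_le_mul_of_nonneg_left hnext (by positivity)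
        linarith
      have key2 : ((ℓ:ℝ)*(N:ℝ)⁻¹) ≤ (ν:ℝ)*(N:ℝ)⁻¹ := mul_le_mul_of_nonneg_right hℓν' ha0
      have key3 : ((4*(ν:ℝ)+2))*(N:ℝ)⁻¹ ≤ (N:ℝ)*(N:ℝ)⁻¹ := mul_le_mul_of_nonneg_right h42' ha0
      nlinarith [key1, key2, key3, haN, hE0, ha0, hl0,
        mul_nonneg (mul_nonneg hl0 ha0) hE0, mul_nonneg (Nat.cast_nonneg ν : (0:ℝ) ≤ ν) ha0]
    have hind : ∀ k ℓ, 1 ≤ ℓ → ℓ ≤ ν → ν ≤ ℓ + k →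
        (∑ i ∈ Finset.Icc 1 ν, (μ (Dev N (I N) i ℓ)).toReal) ≤ 2 := by
      intro k
      induction k with
      | zero =>
        intro ℓ hx1 hx2 hx3
        have hℓν : ℓ = ν := by omega
        refine hstep ℓ hx1 hx2 ?_
        rw [hℓν, heν1]
        norm_num
      | succ k ih =>
        intro ℓ hx1 hx2 hx3
        by_cases hcase : ℓ = ν
        · refine hstep ℓ hx1 hx2 ?_
          rw [hcase, heν1]
          norm_num
        · refine hstep ℓ hx1 hx2 ?_
          exact le_trans (hfe (ℓ+1) (by omega)) (ih (ℓ+1) (by omega) (by omega) (by omega))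
    exact hind ν d hd1 hdν (by omega)
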